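/- Let H₁, …, H_{d+1} be closed half-spaces in ℝ^d, each with the origin on its boundary, such that the intersection of all H_i is exactly {0}. Then the outer unit normals n₁, …, n_{d+1} of these half-spaces satisfy: the origin lies in the relative interior of the convex hull of {n₁, …, n_{d+1}}. -/

import Mathlib

open MeasureTheory

theorem stmt0 (d : ℕ) (n : Fin (d + 1) → EuclideanSpace ℝ (Fin d))
    (hunit : ∀ i, ‖n i‖ = 1)
    (hgen : (⋂ i, {x : EuclideanSpace ℝ (Fin d) | (inner ℝ (n i) x : ℝ) ≤ 0}) = {0}) :
    (0 : EuclideanSpace ℝ (Fin d)) ∈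
      intrinsicInterior ℝ (convexHull ℝ (Set.range n)) := by
  classical
  let E := EuclideanSpace ℝ (Fin d)
  set C := convexHull ℝ (Set.range n) with hCdef
  have hconv : Convex ℝ C := convex_convexHull ℝ _
  have hclosed : IsClosed C := ((Set.finite_range n).isCompact_convexHull (𝕜 := ℝ)).isClosed
  have key : ∀ u : E, (∀ i, (inner ℝ (n i) u : ℝ) ≤ 0) → u = 0 := by
    intro u hu
    have : u ∈ ⋂ i, {x : E | (inner ℝ (n i) x : ℝ) ≤ 0} := Set.mem_iInter.2 hu
    rwa [hgen, Set.mem_singleton_iff] at this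
  have hnC : ∀ i, n i ∈ C := fun i => subset_convexHull ℝ _ ⟨i, rfl⟩
  suffices h : (0 : E) ∈ interior C from interior_subset_intrinsicInterior h
  by_contra h0
  -- 0 ∈ C
  have h0C : (0 : E) ∈ C := by
    by_contra h0C
    obtain ⟨f, s, hs1, hs2⟩ := geometric_hahn_banach_point_closed hconv hclosed h0C
    set u := (InnerProductSpace.toDual ℝ E).symm f with hudef
    have hu : ∀ x : E, (inner ℝ u x : ℝ) = f x := fun x =>
      InnerProductSpace.toDual_symm_apply
    have hneg : ∀ i, (inner ℝ (n i) (-u) : ℝ) ≤ 0 := by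
      intro i
      have : s < f (n i) := hs2 _ (hnC i)
      have h0s : f 0 < s := hs1
      simp only [map_zero] at h0s
      have : (0 : ℝ) < (inner ℝ u (n i) : ℝ) := by rw [hu]; linarith
      rw [real_inner_comm, inner_neg_left]
      linarith
    have hu0 : -u = 0 := key _ hneg
    have : u = 0 := by simpa using hu0
    have hf0 : f (n 0) = 0 := by
      rw [← hu (n 0), this, inner_zero_left]
    have := hs2 _ (hnC 0)
    have h0s : f 0 < s := hs1
    simp only [map_zero] at h0s
    linarith [hf0 ▸ this]
  -- find separating u ≠ 0
  obtain ⟨u, hu0, huC⟩ : ∃ u : E, u ≠ 0 ∧ ∀ c ∈ C, (inner ℝ u c : ℝ) ≤ 0 := by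
    by_cases hint : (interior C).Nonempty
    · obtain ⟨f, hf⟩ := geometric_hahn_banach_open_point hconv.interior isOpen_interior h0
      set u := (InnerProductSpace.toDual ℝ E).symm f with hudef
      have hu : ∀ x : E, (inner ℝ u x : ℝ) = f x := fun x =>
        InnerProductSpace.toDual_symm_apply
      obtain ⟨x0, hx0⟩ := hint
      have hfx0 : f x0 < 0 := by simpa using hf x0 hx0
      refine ⟨u, ?_, ?_⟩
      · intro h
        have : f x0 = 0 := by rw [← hu, h, inner_zero_left]
        linarith
      · intro c hc
        rw [hu]
        by_contra hfc
        push_neg at hfc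
        set a := f c with ha
        set b := -f x0 with hb
        have hb0 : 0 < b := by simp [hb]; linarith
        set t : ℝ := a / (2 * (a + b)) with ht
        have hab : 0 < a + b := by linarith
        have ht0 : 0 < t := by positivity
        have ht1 : t < 1 := by
          rw [ht, div_lt_one (by linarith)]
          linarith
        have hmem : (1 - t) • c + t • x0 ∈ interior C :=
          hconv.combo_closure_interior_mem_interior (subset_closure hc) hx0
            (by linarith) ht0 (by ring)
        have hlt : f ((1 - t) • c + t • x0) < 0 := by simpa using hf _ hmem
        have heq : f ((1 - t) • c + t • x0) = (1 - t) * a + t * (-b) := by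
          simp [map_add, _root_.map_smul, smul_eq_mul, ha, hb]
        rw [heq] at hlt
        have : (1 - t) * a + t * (-b) = a - t * (a + b) := by ring
        rw [this] at hlt
        have : t * (a + b) = a / 2 := by
          rw [ht]; field_simp
        rw [this] at hlt
        linarith
    · rw [Set.not_nonempty_iff_eq_empty] at hint
      have hspan : Submodule.span ℝ C ≠ ⊤ := by
        intro htop
        have hvs : vectorSpan ℝ C = ⊤ := by
          refine top_le_iff.1 ?_
          rw [← htop]
          refine Submodule.span_le.2 fun c hc => ?_
          simpa using vsub_mem_vectorSpan ℝ hc h0C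
        have haff : affineSpan ℝ C = ⊤ := by
          rw [← AffineSubspace.direction_eq_top_iff_of_nonempty
            ((affineSpan_nonempty ℝ).2 ⟨0, h0C⟩)]
          rw [direction_affineSpan]
          exact hvs
        have : (interior C).Nonempty := hconv.interior_nonempty_iff_affineSpan_eq_top.2 haff
        simp [hint] at this
      have horth : (Submodule.span ℝ C)ᗮ ≠ ⊥ := by
        rwa [Ne, Submodule.orthogonal_eq_bot_iff]
      obtain ⟨u, huK, hune⟩ := Submodule.exists_mem_ne_zero_of_ne_bot horth
      exact ⟨u, hune, fun c hc => le_of_eq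
        ((Submodule.mem_orthogonal' _ _).1 huK c (Submodule.subset_span hc))⟩
  have : ∀ i, (inner ℝ (n i) u : ℝ) ≤ 0 := fun i => by
    rw [real_inner_comm]; exact huC _ (hnC i)
  exact hu0 (key u this)
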